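/- Let K : ℝ_{≥0} → ℝ be bounded and Riemann integrable on every interval [0, a]. Then for any q ≥ 1 and any closed rectangle A ⊆ ℝ^q, the function v ↦ K(‖v‖) is Riemann integrable on A, where ‖·‖ is the Euclidean norm on ℝ^q. -/

import Mathlib

open MeasureTheory

/-- A function is Riemann integrable on a set iff it is bounded there and (by
Lebesgue's criterion) its set of discontinuity points within the set has
Lebesgue measure zero. -/
def RiemannIntegrableOn {E : Type*} [MeasurableSpace E] [TopologicalSpace E]
    (f : E → ℝ) (A : Set E) (μ : Measure E) : Prop :=
  Bornology.IsBounded (f '' A) ∧ μ {x ∈ A | ¬ ContinuousWithinAt f A x} = 0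

open Set Metric Measure Filter

lemma norm_preimage_null {q : ℕ} (hq : 1 ≤ q) {S : Set ℝ} (hS : volume S = 0) :
    volume {x : EuclideanSpace ℝ (Fin q) | ‖x‖ ∈ S} = 0 := by
  set E := EuclideanSpace ℝ (Fin q)
  haveI : Nonempty (Fin q) := ⟨⟨0, hq⟩⟩
  haveI : Nontrivial E := inferInstanceAs (Nontrivial (PiLp 2 fun _ : Fin q => ℝ))
  obtain ⟨S₀, hsub, hS₀m, hS₀⟩ := exists_measurable_superset_of_null hS
  have key : volume {x : E | ‖x‖ ∈ S₀} = 0 := by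
    have h0 : (volume : Measure E) {(0 : E)} = 0 := measure_singleton 0
    have hdiff : volume ({x : E | ‖x‖ ∈ S₀} \ {0}) = 0 := by
      set h := homeomorphUnitSphereProd E
      have hmp := measurePreserving_homeomorphUnitSphereProd (volume : Measure E)
      set s' : Set (Ioi (0:ℝ)) := Subtype.val ⁻¹' S₀ with hs'
      have hs'm : MeasurableSet s' := hS₀m.preimage measurable_subtype_coe
      have hvol_s' : Measure.volumeIoiPow (Module.finrank ℝ E - 1) s' = 0 := by
        refine withDensity_absolutelyContinuous _ _ ?_
        rw [comap_subtype_coe_apply measurableSet_Ioi]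
        exact measure_mono_null (image_preimage_subset _ _) hS₀
      have hsub2 : ({x : E | ‖x‖ ∈ S₀} \ {0} : Set E)
          ⊆ Subtype.val '' (h ⁻¹' (univ ×ˢ s')) := by
        rintro x ⟨hx, hx0⟩
        refine ⟨⟨x, hx0⟩, ?_, rfl⟩
        simp only [mem_preimage, mem_prod, mem_univ, true_and]
        show ‖x‖ / 1 ∈ S₀
        rw [div_one]
        exact hx
      refine measure_mono_null hsub2 ?_
      have hc := comap_subtype_coe_apply (measurableSet_singleton (0:E)).compl
        (volume : Measure E) (h ⁻¹' (univ ×ˢ s'))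
      rw [← hc, hmp.measure_preimage (MeasurableSet.univ.prod hs'm).nullMeasurableSet,
        prod_prod, hvol_s', mul_zero]
    exact measure_mono_null (subset_diff_union _ _) (measure_union_null hdiff h0)
  exact measure_mono_null (fun x hx => hsub hx) key

/-- If `K : ℝ → ℝ` is bounded and Riemann integrable on every interval `[0, a]`,
then for every `q ≥ 1` and every closed rectangle `A ⊆ ℝ^q`, the function
`v ↦ K ‖v‖` is Riemann integrable on `A`. -/
theorem stmt2 (K : ℝ → ℝ)
    (hbdd : ∃ C, ∀ t, |K t| ≤ C)
    (hK : ∀ a : ℝ, 0 < a → RiemannIntegrableOn K (Set.Icc 0 a) volume)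
    (q : ℕ) (hq : 1 ≤ q)
    (l u : Fin q → ℝ)
    (A : Set (EuclideanSpace ℝ (Fin q)))
    (hA : A = {v : EuclideanSpace ℝ (Fin q) | ∀ i, v i ∈ Set.Icc (l i) (u i)}) :
    RiemannIntegrableOn (fun v => K ‖v‖) A volume := by
  obtain ⟨C, hC⟩ := hbdd
  constructor
  · refine isBounded_iff_forall_norm_le.2 ⟨C, ?_⟩
    rintro y ⟨v, -, rfl⟩
    simpa [Real.norm_eq_abs] using hC ‖v‖
  · set M : ℝ := Real.sqrt (∑ i, max |l i| |u i| ^ 2) with hM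
    have hMnn : 0 ≤ M := Real.sqrt_nonneg _
    have hnorm_le : ∀ v ∈ A, ‖v‖ ≤ M := by
      intro v hv
      rw [hA] at hv
      rw [EuclideanSpace.norm_eq]
      refine Real.sqrt_le_sqrt (Finset.sum_le_sum fun i _ => ?_)
      have h1 : |v i| ≤ max |l i| |u i| := by
        rcases hv i with ⟨h2, h3⟩
        rcases abs_le.mp (le_refl |v i|) with _
        refine abs_le.2 ⟨?_, h3.trans ((le_abs_self _).trans (le_max_right _ _))⟩
        calc -(max |l i| |u i|) ≤ -|l i| := neg_le_neg (le_max_left _ _)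
          _ ≤ l i := neg_abs_le _
          _ ≤ v i := h2
      simpa [Real.norm_eq_abs, sq_abs] using pow_le_pow_left₀ (abs_nonneg _) h1 2
    set a : ℝ := M + 1 with ha
    have ha0 : 0 < a := by positivity
    have hS := (hK a ha0).2
    set S := {t ∈ Set.Icc (0:ℝ) a | ¬ ContinuousWithinAt K (Set.Icc 0 a) t}
    refine measure_mono_null ?_ (norm_preimage_null hq hS)
    rintro v ⟨hvA, hvd⟩
    have hva : ‖v‖ ≤ M := hnorm_le v hvA
    refine ⟨⟨norm_nonneg _, hva.trans (by linarith)⟩, fun hcont => hvd ?_⟩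
    show Tendsto (fun x => K ‖x‖) (nhdsWithin v A) (nhds (K ‖v‖))
    refine hcont.tendsto.comp ?_
    rw [tendsto_nhdsWithin_iff]
    constructor
    · exact (continuous_norm.tendsto v).mono_left nhdsWithin_le_nhds
    · filter_upwards [self_mem_nhdsWithin] with x hx
      exact ⟨norm_nonneg _, (hnorm_le x hx).trans (by linarith)⟩
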